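/- The ideal of p-compact maps is the surjective hull of the right p-nuclear maps: Let 1 ≤ p < ∞ and let T : X → Y be a bounded linear map between Banach spaces. Let Q_X : ℓ_1(B_X) → X be the canonical metric surjection Q_X(α) = ∑_{x ∈ B_X} α_x x. Then T is p-compact if and only if T ∘ Q_X : ℓ_1(B_X) → Y is right p-nuclear, and in that case κ_p(T) = ν^p(T ∘ Q_X). -/

import Mathlib

noncomputable section

open scoped ENNReal NNReal

/-- The conjugate exponent `p'` of `p : ℝ≥0∞`, characterized by `1/p + 1/p' = 1`
(with the conventions `1' = ∞` and `∞' = 1`). -/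
def conjExp (p : ℝ≥0∞) : ℝ≥0∞ := (1 - 1/p)⁻¹

theorem one_le_conjExp (p : ℝ≥0∞) : 1 ≤ conjExp p := by
  rw [conjExp]
  rw [ENNReal.one_le_inv]
  exact tsub_le_self

instance (p : ℝ≥0∞) : Fact (1 ≤ conjExp p) := ⟨one_le_conjExp p⟩

/-- The `ℓ_p`-norm `(∑ₙ ‖y n‖^p)^(1/p)` of a `p`-summable sequence `y`. -/
def lpNorm {X : Type*} [NormedAddCommGroup X] (p : ℝ≥0∞) (y : ℕ → X)
    (hy : Memℓp y p) : ℝ :=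
  ‖(⟨y, hy⟩ : lp (fun _ : ℕ => X) p)‖

/-- The `p`-convex hull of a sequence `x` in `X`, taken with respect to the exponent `q`
(in the applications below, `q` is the conjugate exponent of `p`):
the set of all sums `∑ₙ αₙ • xₙ` with `(αₙ) ∈ ℓ_q`, `‖(αₙ)‖_q ≤ 1`. -/
def pCo (𝕜 : Type*) [RCLike 𝕜] {X : Type*} [NormedAddCommGroup X] [NormedSpace 𝕜 X]
    (q : ℝ≥0∞) (x : ℕ → X) : Set X :=
  {v | ∃ α : lp (fun _ : ℕ => 𝕜) q, ‖α‖ ≤ 1 ∧ HasSum (fun n => α n • x n) v}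

/-- A set `K ⊆ X` is relatively `p`-compact if it is contained in the `p`-convex hull of a
`p`-summable sequence of `X`. -/
def RelPCompact (𝕜 : Type*) [RCLike 𝕜] {X : Type*} [NormedAddCommGroup X]
    [NormedSpace 𝕜 X] (p : ℝ≥0∞) (K : Set X) : Prop :=
  ∃ x : ℕ → X, Memℓp x p ∧ K ⊆ pCo 𝕜 (conjExp p) x

/-- A bounded linear map is `p`-compact if the image of the closed unit ball is contained in
the `p`-convex hull of a `p`-summable sequence of the target space. -/
def IsPCompact (𝕜 : Type*) [RCLike 𝕜] {X Y : Type*}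
    [SeminormedAddCommGroup X] [NormedSpace 𝕜 X]
    [NormedAddCommGroup Y] [NormedSpace 𝕜 Y] (p : ℝ≥0∞) (T : X →L[𝕜] Y) : Prop :=
  ∃ y : ℕ → Y, Memℓp y p ∧ T '' Metric.closedBall 0 1 ⊆ pCo 𝕜 (conjExp p) y

/-- The `p`-compact norm `κ_p(T) = inf { ‖(yₙ)‖_p : T(B_X) ⊆ p-co((yₙ)) }`. -/
def kappa (𝕜 : Type*) [RCLike 𝕜] {X Y : Type*}
    [SeminormedAddCommGroup X] [NormedSpace 𝕜 X]
    [NormedAddCommGroup Y] [NormedSpace 𝕜 Y] (p : ℝ≥0∞) (T : X →L[𝕜] Y) : ℝ :=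
  sInf {c : ℝ | ∃ (y : ℕ → Y) (hy : Memℓp y p),
    T '' Metric.closedBall 0 1 ⊆ pCo 𝕜 (conjExp p) y ∧ c = lpNorm p y hy}

/-- `C` is an upper bound for the weak `ℓ_q`-norm of the sequence `(x'ₙ)` of functionals,
i.e. `‖(x'ₙ(x))ₙ‖_q ≤ C‖x‖` for every `x` (equivalently,
`sup_{‖x‖ ≤ 1} ‖(x'ₙ(x))ₙ‖_q ≤ C`). -/
def WeakLpBound (𝕜 : Type*) [RCLike 𝕜] {X : Type*} [SeminormedAddCommGroup X]
    [NormedSpace 𝕜 X] (q : ℝ≥0∞) (x' : ℕ → (X →L[𝕜] 𝕜)) (C : ℝ) : Prop :=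
  ∀ x : X, ∃ h : Memℓp (fun n => x' n x) q, lpNorm q (fun n => x' n x) h ≤ C * ‖x‖

/-- A bounded linear map `T : X → Y` is right `p`-nuclear if `T x = ∑ₙ x'ₙ(x) yₙ` for some
weakly `p'`-summable sequence `(x'ₙ)` in `X'` and some `(yₙ)` with `∑ₙ ‖yₙ‖^p < ∞`. -/
def IsRightPNuclear (𝕜 : Type*) [RCLike 𝕜] {X Y : Type*}
    [SeminormedAddCommGroup X] [NormedSpace 𝕜 X]
    [NormedAddCommGroup Y] [NormedSpace 𝕜 Y] (p : ℝ≥0∞) (T : X →L[𝕜] Y) : Prop :=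
  ∃ (x' : ℕ → (X →L[𝕜] 𝕜)) (y : ℕ → Y) (C : ℝ), 0 ≤ C ∧
    WeakLpBound 𝕜 (conjExp p) x' C ∧ Memℓp y p ∧
    ∀ x : X, HasSum (fun n => x' n x • y n) (T x)

/-- The right `p`-nuclear norm
`ν^p(T) = inf ‖(x'ₙ)‖^w_{p'} ⬝ (∑ₙ ‖yₙ‖^p)^{1/p}` over all representations of `T`. -/
def nuP (𝕜 : Type*) [RCLike 𝕜] {X Y : Type*}
    [SeminormedAddCommGroup X] [NormedSpace 𝕜 X]
    [NormedAddCommGroup Y] [NormedSpace 𝕜 Y] (p : ℝ≥0∞) (T : X →L[𝕜] Y) : ℝ :=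
  sInf {c : ℝ | ∃ (x' : ℕ → (X →L[𝕜] 𝕜)) (y : ℕ → Y) (C : ℝ) (hy : Memℓp y p), 0 ≤ C ∧
    WeakLpBound 𝕜 (conjExp p) x' C ∧
    (∀ x : X, HasSum (fun n => x' n x • y n) (T x)) ∧
    c = C * lpNorm p y hy}
section MyAux

variable {𝕜 : Type*} [RCLike 𝕜] {Y : Type*} [NormedAddCommGroup Y] [NormedSpace 𝕜 Y]

lemma conjExp_ne_zero (p : ℝ≥0∞) : conjExp p ≠ 0 :=
  (zero_lt_one.trans_le (one_le_conjExp p)).ne'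

lemma isConjExponent_toReal {p : ℝ≥0∞} (h1 : 1 < p) (hp : p ≠ ∞) :
    p.toReal.HolderConjugate (conjExp p).toReal := by
  have hpinv_lt : p⁻¹ < 1 := ENNReal.inv_lt_one.mpr h1
  have htR : (conjExp p).toReal⁻¹ = 1 - p.toReal⁻¹ := by
    rw [← ENNReal.toReal_inv, conjExp, one_div, inv_inv,
      ENNReal.toReal_sub_of_le (ENNReal.inv_le_one.mpr h1.le) ENNReal.one_ne_top,
      ENNReal.toReal_one, ENNReal.toReal_inv]
  rw [Real.holderConjugate_iff]
  constructor
  · rw [← ENNReal.toReal_one]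
    exact (ENNReal.toReal_lt_toReal ENNReal.one_ne_top hp).mpr h1
  · rw [htR]; ring

lemma holder_conjExp {p : ℝ≥0∞} (hp1 : 1 ≤ p) (hp : p ≠ ∞)
    (g : lp (fun _ : ℕ => 𝕜) (conjExp p)) (f : lp (fun _ : ℕ => Y) p) :
    Summable (fun n => ‖g n‖ * ‖f n‖) ∧ ∑' n, ‖g n‖ * ‖f n‖ ≤ ‖g‖ * ‖f‖ := by
  rcases eq_or_lt_of_le hp1 with h1 | h1
  · have hgb : ∀ n, ‖g n‖ ≤ ‖g‖ := fun n => lp.norm_apply_le_norm (conjExp_ne_zero p) g n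
    have hf1 : HasSum (fun n => ‖f n‖) ‖f‖ := by
      have h := lp.hasSum_norm (p := p) (by rw [← h1]; norm_num) f
      simpa [← h1] using h
    have hsum : Summable (fun n => ‖g n‖ * ‖f n‖) :=
      (hf1.summable.mul_left ‖g‖).of_nonneg_of_le (fun n => by positivity)
        (fun n => mul_le_mul_of_nonneg_right (hgb n) (norm_nonneg _))
    refine ⟨hsum, ?_⟩
    calc ∑' n, ‖g n‖ * ‖f n‖ ≤ ∑' n, ‖g‖ * ‖f n‖ :=
          Summable.tsum_le_tsum (fun n => mul_le_mul_of_nonneg_right (hgb n) (norm_nonneg _)) hsum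
            (hf1.summable.mul_left _)
      _ = ‖g‖ * ‖f‖ := by rw [tsum_mul_left, hf1.tsum_eq]
  · have hpq := isConjExponent_toReal h1 hp
    have hf₂ := lp.hasSum_norm hpq.pos f
    have hg₂ := lp.hasSum_norm hpq.symm.pos g
    obtain ⟨C, hC0, hC', hC⟩ := Real.inner_le_Lp_mul_Lq_hasSum_of_nonneg hpq
      (lp.norm_nonneg' f) (lp.norm_nonneg' g) (fun n => norm_nonneg _) (fun n => norm_nonneg _)
      hf₂ hg₂
    have hs : Summable fun n => ‖g n‖ * ‖f n‖ := by
      simpa [mul_comm] using hC.summable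
    refine ⟨hs, ?_⟩
    calc ∑' n, ‖g n‖ * ‖f n‖ = ∑' n, ‖f n‖ * ‖g n‖ := by simp [mul_comm]
      _ = C := hC.tsum_eq
      _ ≤ ‖f‖ * ‖g‖ := hC'
      _ = ‖g‖ * ‖f‖ := mul_comm _ _

/-- Coordinate evaluation as a continuous linear map on `lp`. -/
def evalCLM (𝕜 : Type*) [RCLike 𝕜] (q : ℝ≥0∞) [hq : Fact (1 ≤ q)] (n : ℕ) :
    lp (fun _ : ℕ => 𝕜) q →L[𝕜] 𝕜 :=
  LinearMap.mkContinuous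
    { toFun := fun f => f n
      map_add' := fun f g => by simp only [lp.coeFn_add, Pi.add_apply]
      map_smul' := fun c f => by simp only [lp.coeFn_smul, Pi.smul_apply, RingHom.id_apply] }
    1 (fun f => by
      rw [one_mul]; exact lp.norm_apply_le_norm (zero_lt_one.trans_le hq.out).ne' f n)

lemma evalCLM_apply (𝕜 : Type*) [RCLike 𝕜] (q : ℝ≥0∞) [Fact (1 ≤ q)] (n : ℕ)
    (f : lp (fun _ : ℕ => 𝕜) q) : evalCLM 𝕜 q n f = f n := rfl

lemma lpNorm_eq_norm {p : ℝ≥0∞} {y : ℕ → Y} (hy : Memℓp y p)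
    (g : lp (fun _ : ℕ => Y) p) (hg : ⇑g = y) : lpNorm p y hy = ‖g‖ := by
  subst hg; rfl

end MyAux
section MyAux2
set_option linter.unusedSectionVars false
set_option maxHeartbeats 1000000

variable {𝕜 : Type*} [RCLike 𝕜] {X Y : Type*}
  [NormedAddCommGroup X] [NormedSpace 𝕜 X]
  [NormedAddCommGroup Y] [NormedSpace 𝕜 Y] [CompleteSpace Y]

lemma repA {p : ℝ≥0∞} (hp1 : 1 ≤ p) (hp : p ≠ ∞)
    (Q : lp (fun _ : ↥(Metric.closedBall (0 : X) 1) => 𝕜) 1 →L[𝕜] X)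
    (hQ : ∀ α : lp (fun _ : ↥(Metric.closedBall (0 : X) 1) => 𝕜) 1,
      HasSum (fun i : ↥(Metric.closedBall (0 : X) 1) => α i • (i : X)) (Q α))
    (T : X →L[𝕜] Y) (y : ℕ → Y) (hy : Memℓp y p)
    (hsub : T '' Metric.closedBall 0 1 ⊆ pCo 𝕜 (conjExp p) y) :
    ∃ x' : ℕ → (lp (fun _ : ↥(Metric.closedBall (0 : X) 1) => 𝕜) 1 →L[𝕜] 𝕜),
      WeakLpBound 𝕜 (conjExp p) x' 1 ∧
      ∀ α, HasSum (fun n => x' n α • y n) ((T.comp Q) α) := by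
  classical
  set q := conjExp p with hq
  set yl : lp (fun _ : ℕ => Y) p := ⟨y, hy⟩ with hyl
  have hqne : q ≠ 0 := conjExp_ne_zero p
  -- choose representations for T i, i in the ball
  have hmem : ∀ i : ↥(Metric.closedBall (0 : X) 1), T ↑i ∈ pCo 𝕜 q y := fun i => hsub (Set.mem_image_of_mem T i.2)
  choose β hβ1 hβ2 using hmem
  -- basic summability facts
  have hαnorm : ∀ α : lp (fun _ : ↥(Metric.closedBall (0 : X) 1) => 𝕜) 1, HasSum (fun i => ‖α i‖) ‖α‖ := by
    intro α
    have h := lp.hasSum_norm (p := (1 : ℝ≥0∞)) (by norm_num) α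
    simpa using h
  have hβb : ∀ (i : ↥(Metric.closedBall (0 : X) 1)) (n : ℕ), ‖β i n‖ ≤ 1 :=
    fun i n => (lp.norm_apply_le_norm hqne (β i) n).trans (hβ1 i)
  have hsm : ∀ (α : lp (fun _ : ↥(Metric.closedBall (0 : X) 1) => 𝕜) 1) (n : ℕ), Summable (fun i : ↥(Metric.closedBall (0 : X) 1) => α i * β i n) := by
    intro α n
    refine Summable.of_norm_bounded (hαnorm α).summable (fun i => ?_)
    rw [norm_mul]
    exact mul_le_of_le_one_right (norm_nonneg _) (hβb i n)
  have hsmul : ∀ α : lp (fun _ : ↥(Metric.closedBall (0 : X) 1) => 𝕜) 1, Summable (fun i : ↥(Metric.closedBall (0 : X) 1) => α i • β i) := by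
    intro α
    refine Summable.of_norm_bounded (hαnorm α).summable (fun i => ?_)
    rw [norm_smul]
    exact mul_le_of_le_one_right (norm_nonneg _) (hβ1 i)
  -- the lp-valued sum
  set Φ : lp (fun _ : ↥(Metric.closedBall (0 : X) 1) => 𝕜) 1 → lp (fun _ : ℕ => 𝕜) q := fun α => ∑' i : ↥(Metric.closedBall (0 : X) 1), α i • β i
    with hΦ
  have hcoord : ∀ (α : lp (fun _ : ↥(Metric.closedBall (0 : X) 1) => 𝕜) 1) (n : ℕ), Φ α n = ∑' i : ↥(Metric.closedBall (0 : X) 1), α i * β i n := by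
    intro α n
    have h := (evalCLM 𝕜 q n).map_tsum (hsmul α)
    rw [hΦ]
    refine h.trans (tsum_congr fun i => ?_)
    rw [evalCLM_apply, lp.coeFn_smul, Pi.smul_apply, smul_eq_mul]
  have hsmn : ∀ α : lp (fun _ : ↥(Metric.closedBall (0 : X) 1) => 𝕜) 1, Summable (fun i : ↥(Metric.closedBall (0 : X) 1) => ‖α i • β i‖) := by
    intro α
    refine (hαnorm α).summable.of_nonneg_of_le (fun i => norm_nonneg _) (fun i => ?_)
    rw [norm_smul]
    exact mul_le_of_le_one_right (norm_nonneg _) (hβ1 i)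
  have hΦnorm : ∀ α, ‖Φ α‖ ≤ ‖α‖ := by
    intro α
    refine (norm_tsum_le_tsum_norm (hsmn α)).trans ?_
    calc ∑' i : ↥(Metric.closedBall (0 : X) 1), ‖α i • β i‖ ≤ ∑' i : ↥(Metric.closedBall (0 : X) 1), ‖α i‖ := by
          refine Summable.tsum_le_tsum (fun i => ?_) (hsmn α) (hαnorm α).summable
          rw [norm_smul]
          exact mul_le_of_le_one_right (norm_nonneg _) (hβ1 i)
      _ = ‖α‖ := (hαnorm α).tsum_eq
  -- the functionals
  set F : ℕ → (lp (fun _ : ↥(Metric.closedBall (0 : X) 1) => 𝕜) 1 →L[𝕜] 𝕜) := fun n =>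
    LinearMap.mkContinuous
      { toFun := fun α => ∑' i : ↥(Metric.closedBall (0 : X) 1), α i * β i n
        map_add' := fun α α' => by
          simp only [lp.coeFn_add, Pi.add_apply, add_mul]
          exact Summable.tsum_add (hsm α n) (hsm α' n)
        map_smul' := fun c α => by
          simp only [lp.coeFn_smul, Pi.smul_apply, smul_eq_mul, RingHom.id_apply, mul_assoc]
          exact tsum_mul_left }
      1 (fun α => by
        rw [one_mul]
        calc ‖∑' i : ↥(Metric.closedBall (0 : X) 1), α i * β i n‖ ≤ ∑' i : ↥(Metric.closedBall (0 : X) 1), ‖α i‖ := by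
              refine (norm_tsum_le_tsum_norm ?_).trans (Summable.tsum_le_tsum (fun i => ?_) ?_ (hαnorm α).summable)
              · refine (hαnorm α).summable.of_nonneg_of_le (fun i => norm_nonneg _) (fun i => ?_)
                rw [norm_mul]
                exact mul_le_of_le_one_right (norm_nonneg _) (hβb i n)
              · rw [norm_mul]
                exact mul_le_of_le_one_right (norm_nonneg _) (hβb i n)
              · refine (hαnorm α).summable.of_nonneg_of_le (fun i => norm_nonneg _) (fun i => ?_)
                rw [norm_mul]
                exact mul_le_of_le_one_right (norm_nonneg _) (hβb i n)
          _ = ‖α‖ := (hαnorm α).tsum_eq)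
    with hF
  have hFapp : ∀ (n) (α), F n α = ∑' i : ↥(Metric.closedBall (0 : X) 1), α i * β i n := fun n α => rfl
  have hkey : ∀ α, (fun n => F n α) = ⇑(Φ α) := by
    intro α
    funext n
    rw [hFapp, hcoord]
  refine ⟨F, ?_, ?_⟩
  · -- WeakLpBound
    intro α
    refine ⟨(hkey α) ▸ lp.memℓp (Φ α), ?_⟩
    rw [one_mul, lpNorm_eq_norm _ (Φ α) (hkey α).symm]
    exact hΦnorm α
  · -- HasSum
    intro α
    have hnormsum : Summable (fun z : ↥(Metric.closedBall (0 : X) 1) × ℕ => ‖α z.1‖ * (‖β z.1 z.2‖ * ‖y z.2‖)) := by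
      have hol1 : ∀ i : ↥(Metric.closedBall (0 : X) 1), Summable (fun n => ‖β i n‖ * ‖y n‖) :=
        fun i => (holder_conjExp hp1 hp (β i) yl).1
      have hol2 : ∀ i : ↥(Metric.closedBall (0 : X) 1), ∑' n, ‖β i n‖ * ‖y n‖ ≤ ‖β i‖ * ‖yl‖ :=
        fun i => (holder_conjExp hp1 hp (β i) yl).2
      rw [summable_prod_of_nonneg (fun z => by positivity)]
      refine ⟨fun i => (hol1 i).mul_left ‖α i‖, ?_⟩
      have hb : ∀ i : ↥(Metric.closedBall (0 : X) 1), ∑' n, ‖α i‖ * (‖β i n‖ * ‖y n‖) ≤ ‖α i‖ * ‖yl‖ := by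
        intro i
        rw [tsum_mul_left]
        refine mul_le_mul_of_nonneg_left ?_ (norm_nonneg _)
        refine (hol2 i).trans ?_
        exact mul_le_of_le_one_left (lp.norm_nonneg' yl) (hβ1 i)
      refine ((hαnorm α).summable.mul_right ‖yl‖).of_nonneg_of_le
        (fun i => tsum_nonneg (fun n => by positivity)) hb
    have hgsum : Summable (fun z : ↥(Metric.closedBall (0 : X) 1) × ℕ => α z.1 • (β z.1 z.2 • y z.2)) := by
      refine Summable.of_norm ?_
      simpa only [norm_smul] using hnormsum
    have h1 : HasSum (fun i : ↥(Metric.closedBall (0 : X) 1) => α i • T ↑i)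
        (∑' z : ↥(Metric.closedBall (0 : X) 1) × ℕ, α z.1 • (β z.1 z.2 • y z.2)) :=
      hgsum.hasSum.prod_fiberwise (fun i => (hβ2 i).const_smul (α i))
    have h2 : HasSum (fun i : ↥(Metric.closedBall (0 : X) 1) => α i • T ↑i) (T (Q α)) := by
      have h := (hQ α).mapL T
      simpa only [map_smul] using h
    have hS : (∑' z : ↥(Metric.closedBall (0 : X) 1) × ℕ, α z.1 • (β z.1 z.2 • y z.2)) = T (Q α) := h1.unique h2
    have hswap : HasSum (fun z : ℕ × (↥(Metric.closedBall (0 : X) 1)) => α z.2 • (β z.2 z.1 • y z.1)) (T (Q α)) := by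
      have h := (Equiv.prodComm ℕ (↥(Metric.closedBall (0 : X) 1))).hasSum_iff.mpr (hS ▸ hgsum.hasSum)
      exact h
    have hfib : ∀ n : ℕ, HasSum (fun i : ↥(Metric.closedBall (0 : X) 1) => α i • (β i n • y n)) (F n α • y n) := by
      intro n
      have h := (hsm α n).hasSum.smul_const (y n)
      rw [← hFapp] at h
      simpa only [smul_smul] using h
    have := hswap.prod_fiberwise hfib
    simpa using this

lemma repB {p : ℝ≥0∞} (hp1 : 1 ≤ p) (hp : p ≠ ∞)
    (Q : lp (fun _ : ↥(Metric.closedBall (0 : X) 1) => 𝕜) 1 →L[𝕜] X)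
    (hQ : ∀ α : lp (fun _ : ↥(Metric.closedBall (0 : X) 1) => 𝕜) 1,
      HasSum (fun i : ↥(Metric.closedBall (0 : X) 1) => α i • (i : X)) (Q α))
    (T : X →L[𝕜] Y)
    (x' : ℕ → (lp (fun _ : ↥(Metric.closedBall (0 : X) 1) => 𝕜) 1 →L[𝕜] 𝕜))
    (y : ℕ → Y) (C : ℝ) (hC : 0 ≤ C)
    (hW : WeakLpBound 𝕜 (conjExp p) x' C) (hy : Memℓp y p)
    (hs : ∀ α, HasSum (fun n => x' n α • y n) ((T.comp Q) α)) :
    ∃ hz : Memℓp (fun n => ((C : ℝ) : 𝕜) • y n) p,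
      T '' Metric.closedBall 0 1 ⊆ pCo 𝕜 (conjExp p) (fun n => ((C : ℝ) : 𝕜) • y n) ∧
      lpNorm p (fun n => ((C : ℝ) : 𝕜) • y n) hz = C * lpNorm p y hy := by
  classical
  set q := conjExp p with hqdef
  have hz : Memℓp (fun n => ((C : ℝ) : 𝕜) • y n) p := hy.const_smul ((C : ℝ) : 𝕜)
  have hzl : (⟨fun n => ((C : ℝ) : 𝕜) • y n, hz⟩ : lp (fun _ : ℕ => Y) p)
      = ((C : ℝ) : 𝕜) • (⟨y, hy⟩ : lp (fun _ : ℕ => Y) p) := by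
    apply lp.ext
    rw [lp.coeFn_smul]
    rfl
  have hval : lpNorm p (fun n => ((C : ℝ) : 𝕜) • y n) hz = C * lpNorm p y hy := by
    rw [lpNorm, hzl, lp.norm_const_smul (by
      rcases eq_or_lt_of_le hp1 with h | h
      · rw [← h]; norm_num
      · exact (zero_lt_one.trans h).ne'), RCLike.norm_ofReal, abs_of_nonneg hC, lpNorm]
  refine ⟨hz, ?_, hval⟩
  rintro - ⟨x, hx, rfl⟩
  -- the canonical basis vector at x
  set i : ↥(Metric.closedBall (0 : X) 1) := ⟨x, hx⟩ with hidef
  set α : lp (fun _ : ↥(Metric.closedBall (0 : X) 1) => 𝕜) 1 := lp.single 1 i (1 : 𝕜) with hα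
  have hαapp : ∀ j, α j = if j = i then (1 : 𝕜) else 0 := by
    intro j
    by_cases h : j = i
    · subst h; simp [hα, lp.single_apply_self]
    · simp [hα, lp.single_apply_ne 1 i _ h, h]
  have hQx : Q α = x := by
    have h2 : HasSum (fun j : ↥(Metric.closedBall (0 : X) 1) => α j • (j : X)) x := by
      have h3 : (fun j : ↥(Metric.closedBall (0 : X) 1) => α j • (j : X))
          = fun j => if j = i then x else 0 := by
        funext j
        rw [hαapp j]
        by_cases h : j = i
        · subst h; simp [hidef]
        · simp [h]
      rw [h3]
      exact hasSum_ite_eq i x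
    exact (hQ α).unique h2
  have hαnorm : ‖α‖ = 1 := by
    have h := lp.norm_single (E := fun _ : ↥(Metric.closedBall (0 : X) 1) => 𝕜) (p := (1 : ℝ≥0∞)) (by norm_num) i (1 : 𝕜)
    simpa [hα] using h
  obtain ⟨hmem, hle⟩ := hW α
  have hle' : lpNorm q (fun n => x' n α) hmem ≤ C := by
    simpa [hαnorm] using hle
  have hTx : T x = (T.comp Q) α := by rw [ContinuousLinearMap.comp_apply, hQx]
  rcases eq_or_lt_of_le hC with hC0 | hC0
  · -- C = 0 : T x = 0
    have hnorm0 : lpNorm q (fun n => x' n α) hmem = 0 :=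
      le_antisymm (by rw [← hC0] at hle'; exact hle') (by
        rw [lpNorm]; exact lp.norm_nonneg' _)
    have hzero : (⟨fun n => x' n α, hmem⟩ : lp (fun _ : ℕ => 𝕜) q) = 0 := by
      rw [lpNorm] at hnorm0
      exact norm_eq_zero.mp hnorm0
    have hx0 : ∀ n, x' n α = 0 := by
      intro n
      have := congrFun (congrArg (fun f : lp (fun _ : ℕ => 𝕜) q => ⇑f) hzero) n
      simpa [lp.coeFn_zero] using this
    have hTx0 : T x = 0 := by
      rw [hTx]
      have h := hs α
      have h0 : (fun n => x' n α • y n) = fun _ => (0 : Y) :=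
        funext fun n => by rw [hx0 n, zero_smul]
      rw [h0] at h
      exact h.unique hasSum_zero
    refine ⟨0, by simp, ?_⟩
    have h0 : (fun n => (0 : lp (fun _ : ℕ => 𝕜) q) n • (((C : ℝ) : 𝕜) • y n))
        = fun _ => (0 : Y) := by
      funext n
      rw [lp.coeFn_zero]
      simp
    rw [h0, hTx0]
    exact hasSum_zero
  · -- C > 0
    set γ : lp (fun _ : ℕ => 𝕜) q :=
      ((C⁻¹ : ℝ) : 𝕜) • (⟨fun n => x' n α, hmem⟩ : lp (fun _ : ℕ => 𝕜) q) with hγ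
    have hγnorm : ‖γ‖ ≤ 1 := by
      rw [hγ, norm_smul, RCLike.norm_ofReal, abs_of_nonneg (inv_nonneg.mpr hC)]
      calc C⁻¹ * ‖(⟨fun n => x' n α, hmem⟩ : lp (fun _ : ℕ => 𝕜) q)‖
          ≤ C⁻¹ * C := by
            refine mul_le_mul_of_nonneg_left ?_ (inv_nonneg.mpr hC)
            exact hle'
        _ = 1 := inv_mul_cancel₀ hC0.ne'
    refine ⟨γ, hγnorm, ?_⟩
    have hcc : ((C⁻¹ : ℝ) : 𝕜) * ((C : ℝ) : 𝕜) = 1 := by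
      rw [← RCLike.ofReal_mul, inv_mul_cancel₀ hC0.ne', RCLike.ofReal_one]
    have hfun : (fun n => γ n • (((C : ℝ) : 𝕜) • y n)) = fun n => x' n α • y n := by
      funext n
      have hγn : γ n = ((C⁻¹ : ℝ) : 𝕜) * x' n α := by
        rw [hγ, lp.coeFn_smul]
        rfl
      rw [hγn, smul_smul]
      congr 1
      rw [mul_comm, ← mul_assoc,
        show ((C : ℝ) : 𝕜) * ((C⁻¹ : ℝ) : 𝕜) = 1 from by
          rw [← RCLike.ofReal_mul, mul_inv_cancel₀ hC0.ne', RCLike.ofReal_one], one_mul]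
    rw [hfun, hTx]
    exact hs α

end MyAux2
/-- **`p`-compact maps form the surjective hull of the right `p`-nuclear maps.** Let
`Q_X : ℓ_1(B_X) → X` be the canonical metric surjection `Q_X(α) = ∑_{x ∈ B_X} α_x • x`. Then
`T : X → Y` is `p`-compact iff `T ∘ Q_X` is right `p`-nuclear, in which case
`κ_p(T) = ν^p(T ∘ Q_X)`. -/
theorem isPCompact_iff_comp_canonical_surjection_isRightPNuclear {𝕜 X Y : Type*} [RCLike 𝕜]
    [NormedAddCommGroup X] [NormedSpace 𝕜 X] [CompleteSpace X]
    [NormedAddCommGroup Y] [NormedSpace 𝕜 Y] [CompleteSpace Y]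
    (p : ℝ≥0∞) (hp1 : 1 ≤ p) (hp : p ≠ ∞)
    (Q : lp (fun _ : ↥(Metric.closedBall (0 : X) 1) => 𝕜) 1 →L[𝕜] X)
    (hQ : ∀ α : lp (fun _ : ↥(Metric.closedBall (0 : X) 1) => 𝕜) 1,
      HasSum (fun i : ↥(Metric.closedBall (0 : X) 1) => α i • (i : X)) (Q α))
    (T : X →L[𝕜] Y) :
    (IsPCompact 𝕜 p T ↔ IsRightPNuclear 𝕜 p (T.comp Q)) ∧
    (IsPCompact 𝕜 p T → kappa 𝕜 p T = nuP 𝕜 p (T.comp Q)) := by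
  constructor
  · constructor
    · rintro ⟨y, hy, hsub⟩
      obtain ⟨x', hW, hs⟩ := repA hp1 hp Q hQ T y hy hsub
      exact ⟨x', y, 1, zero_le_one, hW, hy, hs⟩
    · rintro ⟨x', y, C, hC, hW, hy, hs⟩
      obtain ⟨hz, hsub, -⟩ := repB hp1 hp Q hQ T x' y C hC hW hy hs
      exact ⟨_, hz, hsub⟩
  · intro _
    unfold kappa nuP
    congr 1
    ext c
    constructor
    · rintro ⟨y, hy, hsub, rfl⟩
      obtain ⟨x', hW, hs⟩ := repA hp1 hp Q hQ T y hy hsub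
      exact ⟨x', y, 1, hy, zero_le_one, hW, hs, (one_mul _).symm⟩
    · rintro ⟨x', y, C, hy, hC, hW, hs, rfl⟩
      obtain ⟨hz, hsub, hval⟩ := repB hp1 hp Q hQ T x' y C hC hW hy hs
      exact ⟨_, hz, hsub, hval.symm⟩
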